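/- arXiv:2509.03065 — 4 statements merged into one kernel-verified Lean document; each statement's English description precedes it below -/
import Mathlib

section
/- Let (X_n) and (Y_n) be sequences of real-valued random variables in L^4 with, for every n: E[X_n] = 0, E[Y_n] = 0, E[X_nY_n] = 0, E[(X_n + Y_n)²] = 1, κ₄(X_n) ≥ 0, κ₄(Y_n) ≥ 0 and Cov(X_n², Y_n²) ≥ 0. If E[X_n³Y_n] → 0, E[X_nY_n³] → 0 and E[(X_n + Y_n)⁴] → 3 as n → ∞, then κ₄(X_n) → 0, κ₄(Y_n) → 0 and Cov(X_n², Y_n²) → 0. -/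
open MeasureTheory Filter
open scoped ENNReal

private lemma half_eq' : (2⁻¹:ℝ≥0∞) = 4⁻¹ + 4⁻¹ := by
  rw [← two_mul]
  rw [show (4:ℝ≥0∞) = 2*2 by norm_num, ENNReal.mul_inv (by norm_num) (by norm_num)]
  rw [← mul_assoc, ENNReal.mul_inv_cancel (by norm_num) (by norm_num), one_mul]

private lemma int4' {Ω : Type*} [MeasurableSpace Ω] {μ : Measure Ω} {f g h k : Ω → ℝ}
    (hf : MemLp f 4 μ) (hg : MemLp g 4 μ) (hh : MemLp h 4 μ) (hk : MemLp k 4 μ) :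
    Integrable (fun ω => f ω * g ω * h ω * k ω) μ := by
  have hfg : MemLp (f • g) 2 μ := hg.smul hf (hpqr := ⟨by simpa [one_div] using half_eq'.symm⟩)
  have hhk : MemLp (h • k) 2 μ := hk.smul hh (hpqr := ⟨by simpa [one_div] using half_eq'.symm⟩)
  have h1 : MemLp ((f • g) • (h • k)) 1 μ :=
    hhk.smul hfg (hpqr := ⟨by simpa [one_div] using ENNReal.inv_two_add_inv_two⟩)
  have := memLp_one_iff_integrable.mp h1
  simpa [Pi.smul_apply, smul_eq_mul, mul_assoc, Pi.mul_def] using this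

private lemma int2' {Ω : Type*} [MeasurableSpace Ω] {μ : Measure Ω} {f g : Ω → ℝ}
    (hf : MemLp f 2 μ) (hg : MemLp g 2 μ) :
    Integrable (fun ω => f ω * g ω) μ := by
  have h1 : MemLp (f • g) 1 μ :=
    hg.smul hf (hpqr := ⟨by simpa [one_div] using ENNReal.inv_two_add_inv_two⟩)
  have := memLp_one_iff_integrable.mp h1
  simpa [Pi.smul_apply, smul_eq_mul, Pi.mul_def] using this

/-- For sequences `(Xₙ), (Yₙ)` in `L⁴` that are centered, orthogonal, with
`E[(Xₙ+Yₙ)²] = 1`, nonnegative fourth cumulants and nonnegative covariance of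
squares, if `E[Xₙ³Yₙ] → 0`, `E[XₙYₙ³] → 0` and `E[(Xₙ+Yₙ)⁴] → 3`, then
`κ₄(Xₙ) → 0`, `κ₄(Yₙ) → 0` and `Cov(Xₙ², Yₙ²) → 0`, where
`κ₄(W) = E[W⁴] - 3 (E[W²])²` and `Cov(U², V²) = E[U²V²] - E[U²] E[V²]`. -/
theorem fourth_moment_sum_forces_vanishing
    {Ω : Type*} [MeasurableSpace Ω] (μ : Measure Ω) [IsProbabilityMeasure μ]
    (X Y : ℕ → Ω → ℝ)
    (hX : ∀ n, MemLp (X n) 4 μ) (hY : ∀ n, MemLp (Y n) 4 μ)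
    (hEX : ∀ n, ∫ ω, X n ω ∂μ = 0) (hEY : ∀ n, ∫ ω, Y n ω ∂μ = 0)
    (hEXY : ∀ n, ∫ ω, X n ω * Y n ω ∂μ = 0)
    (hvar : ∀ n, ∫ ω, (X n ω + Y n ω) ^ 2 ∂μ = 1)
    (hκX : ∀ n, 0 ≤ (∫ ω, X n ω ^ 4 ∂μ) - 3 * (∫ ω, X n ω ^ 2 ∂μ) ^ 2)
    (hκY : ∀ n, 0 ≤ (∫ ω, Y n ω ^ 4 ∂μ) - 3 * (∫ ω, Y n ω ^ 2 ∂μ) ^ 2)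
    (hCov : ∀ n, 0 ≤ (∫ ω, X n ω ^ 2 * Y n ω ^ 2 ∂μ)
        - (∫ ω, X n ω ^ 2 ∂μ) * (∫ ω, Y n ω ^ 2 ∂μ))
    (hX3Y : Tendsto (fun n => ∫ ω, X n ω ^ 3 * Y n ω ∂μ) atTop (nhds 0))
    (hXY3 : Tendsto (fun n => ∫ ω, X n ω * Y n ω ^ 3 ∂μ) atTop (nhds 0))
    (hZ4 : Tendsto (fun n => ∫ ω, (X n ω + Y n ω) ^ 4 ∂μ) atTop (nhds 3)) :
    Tendsto (fun n => (∫ ω, X n ω ^ 4 ∂μ) - 3 * (∫ ω, X n ω ^ 2 ∂μ) ^ 2)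
        atTop (nhds 0)
    ∧ Tendsto (fun n => (∫ ω, Y n ω ^ 4 ∂μ) - 3 * (∫ ω, Y n ω ^ 2 ∂μ) ^ 2)
        atTop (nhds 0)
    ∧ Tendsto (fun n => (∫ ω, X n ω ^ 2 * Y n ω ^ 2 ∂μ)
        - (∫ ω, X n ω ^ 2 ∂μ) * (∫ ω, Y n ω ^ 2 ∂μ)) atTop (nhds 0) := by
  -- L² membership
  have hX2 : ∀ n, MemLp (X n) 2 μ := fun n => (hX n).mono_exponent (by norm_num)
  have hY2 : ∀ n, MemLp (Y n) 2 μ := fun n => (hY n).mono_exponent (by norm_num)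
  -- second moment identity: ∫X² + ∫Y² = 1
  have hsum2 : ∀ n, (∫ ω, X n ω ^ 2 ∂μ) + (∫ ω, Y n ω ^ 2 ∂μ) = 1 := by
    intro n
    have iXX := int2' (hX2 n) (hX2 n)
    have iXY := int2' (hX2 n) (hY2 n)
    have iYY := int2' (hY2 n) (hY2 n)
    have key : ∫ ω, (X n ω + Y n ω) ^ 2 ∂μ
        = (∫ ω, X n ω * X n ω ∂μ) + ((∫ ω, X n ω * Y n ω ∂μ) * 2
          + (∫ ω, Y n ω * Y n ω ∂μ)) := by
      rw [show (fun ω => (X n ω + Y n ω) ^ 2)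
          = fun ω => X n ω * X n ω + (X n ω * Y n ω * 2 + Y n ω * Y n ω) from
        funext fun ω => by ring]
      have j1 : Integrable (fun ω => X n ω * Y n ω * 2 + Y n ω * Y n ω) μ :=
        (iXY.mul_const 2).add iYY
      have j2 : Integrable (fun ω => X n ω * Y n ω * 2) μ := iXY.mul_const 2
      rw [integral_add iXX j1, integral_add j2 iYY, integral_mul_const]
    have h1 := hvar n
    rw [key] at h1
    have e1 : ∫ ω, X n ω ^ 2 ∂μ = ∫ ω, X n ω * X n ω ∂μ := by
      congr 1; funext ω; ring
    have e2 : ∫ ω, Y n ω ^ 2 ∂μ = ∫ ω, Y n ω * Y n ω ∂μ := by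
      congr 1; funext ω; ring
    rw [e1, e2, hEXY n] at *
    linarith
  -- fourth moment expansion
  have hsum4 : ∀ n, ∫ ω, (X n ω + Y n ω) ^ 4 ∂μ
      = (∫ ω, X n ω ^ 4 ∂μ) + 4 * (∫ ω, X n ω ^ 3 * Y n ω ∂μ)
        + 6 * (∫ ω, X n ω ^ 2 * Y n ω ^ 2 ∂μ)
        + 4 * (∫ ω, X n ω * Y n ω ^ 3 ∂μ) + (∫ ω, Y n ω ^ 4 ∂μ) := by
    intro n
    set x := X n with hx
    set y := Y n with hy
    have i1 : Integrable (fun ω => x ω * x ω * x ω * x ω) μ :=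
      int4' (hX n) (hX n) (hX n) (hX n)
    have i2 : Integrable (fun ω => x ω * x ω * x ω * y ω) μ :=
      int4' (hX n) (hX n) (hX n) (hY n)
    have i3 : Integrable (fun ω => x ω * x ω * y ω * y ω) μ :=
      int4' (hX n) (hX n) (hY n) (hY n)
    have i4 : Integrable (fun ω => x ω * y ω * y ω * y ω) μ :=
      int4' (hX n) (hY n) (hY n) (hY n)
    have i5 : Integrable (fun ω => y ω * y ω * y ω * y ω) μ :=
      int4' (hY n) (hY n) (hY n) (hY n)
    have key : ∫ ω, (x ω + y ω) ^ 4 ∂μ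
        = (∫ ω, x ω * x ω * x ω * x ω ∂μ)
          + ((∫ ω, x ω * x ω * x ω * y ω ∂μ) * 4
          + ((∫ ω, x ω * x ω * y ω * y ω ∂μ) * 6
          + ((∫ ω, x ω * y ω * y ω * y ω ∂μ) * 4
          + (∫ ω, y ω * y ω * y ω * y ω ∂μ)))) := by
      rw [show (fun ω => (x ω + y ω) ^ 4)
          = fun ω => x ω * x ω * x ω * x ω + (x ω * x ω * x ω * y ω * 4
            + (x ω * x ω * y ω * y ω * 6 + (x ω * y ω * y ω * y ω * 4
            + y ω * y ω * y ω * y ω))) from funext fun ω => by ring]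
      have j5 : Integrable (fun ω => x ω * y ω * y ω * y ω * 4
          + y ω * y ω * y ω * y ω) μ := (i4.mul_const 4).add i5
      have j6 : Integrable (fun ω => x ω * x ω * y ω * y ω * 6
          + (x ω * y ω * y ω * y ω * 4 + y ω * y ω * y ω * y ω)) μ :=
        (i3.mul_const 6).add j5
      have j7 : Integrable (fun ω => x ω * x ω * x ω * y ω * 4
          + (x ω * x ω * y ω * y ω * 6
          + (x ω * y ω * y ω * y ω * 4 + y ω * y ω * y ω * y ω))) μ :=
        (i2.mul_const 4).add j6
      rw [integral_add i1 j7, integral_add (i2.mul_const 4) j6,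
        integral_add (i3.mul_const 6) j5, integral_add (i4.mul_const 4) i5,
        integral_mul_const, integral_mul_const, integral_mul_const]
    have e1 : ∫ ω, x ω ^ 4 ∂μ = ∫ ω, x ω * x ω * x ω * x ω ∂μ := by
      congr 1; funext ω; ring
    have e2 : ∫ ω, x ω ^ 3 * y ω ∂μ = ∫ ω, x ω * x ω * x ω * y ω ∂μ := by
      congr 1; funext ω; ring
    have e3 : ∫ ω, x ω ^ 2 * y ω ^ 2 ∂μ = ∫ ω, x ω * x ω * y ω * y ω ∂μ := by
      congr 1; funext ω; ring
    have e4 : ∫ ω, x ω * y ω ^ 3 ∂μ = ∫ ω, x ω * y ω * y ω * y ω ∂μ := by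
      congr 1; funext ω; ring
    have e5 : ∫ ω, y ω ^ 4 ∂μ = ∫ ω, y ω * y ω * y ω * y ω ∂μ := by
      congr 1; funext ω; ring
    rw [key, e1, e2, e3, e4, e5]; ring
  -- the combined quantity s n → 0
  set κx : ℕ → ℝ := fun n => (∫ ω, X n ω ^ 4 ∂μ) - 3 * (∫ ω, X n ω ^ 2 ∂μ) ^ 2 with hκx
  set κy : ℕ → ℝ := fun n => (∫ ω, Y n ω ^ 4 ∂μ) - 3 * (∫ ω, Y n ω ^ 2 ∂μ) ^ 2 with hκy
  set c : ℕ → ℝ := fun n => (∫ ω, X n ω ^ 2 * Y n ω ^ 2 ∂μ)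
      - (∫ ω, X n ω ^ 2 ∂μ) * (∫ ω, Y n ω ^ 2 ∂μ) with hc
  set s : ℕ → ℝ := fun n => (∫ ω, (X n ω + Y n ω) ^ 4 ∂μ)
      - 4 * (∫ ω, X n ω ^ 3 * Y n ω ∂μ) - 4 * (∫ ω, X n ω * Y n ω ^ 3 ∂μ) - 3 with hs
  have hs0 : Tendsto s atTop (nhds 0) := by
    have : Tendsto s atTop (nhds (3 - 4 * 0 - 4 * 0 - 3)) :=
      (((hZ4.sub (hX3Y.const_mul 4)).sub (hXY3.const_mul 4)).sub tendsto_const_nhds)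
    simpa using this
  have hdecomp : ∀ n, κx n + κy n + 6 * c n = s n := by
    intro n
    have h2 := hsum2 n
    have h4 := hsum4 n
    simp only [hκx, hκy, hc, hs]
    linear_combination -h4 - 3*((∫ ω, X n ω ^ 2 ∂μ) + (∫ ω, Y n ω ^ 2 ∂μ) + 1) * h2
  have hκx_le : ∀ n, κx n ≤ s n := fun n => by
    have h1 : (0:ℝ) ≤ κy n := hκY n
    have h2 : (0:ℝ) ≤ c n := hCov n
    linarith [hdecomp n]
  have hκy_le : ∀ n, κy n ≤ s n := fun n => by
    have h1 : (0:ℝ) ≤ κx n := hκX n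
    have h2 : (0:ℝ) ≤ c n := hCov n
    linarith [hdecomp n]
  have hc_le : ∀ n, c n ≤ s n := fun n => by
    have h1 : (0:ℝ) ≤ κx n := hκX n
    have h2 : (0:ℝ) ≤ κy n := hκY n
    have h3 : (0:ℝ) ≤ c n := hCov n
    linarith [hdecomp n]
  refine ⟨?_, ?_, ?_⟩
  · exact squeeze_zero (fun n => hκX n) hκx_le hs0
  · exact squeeze_zero (fun n => hκY n) hκy_le hs0
  · exact squeeze_zero (fun n => hCov n) hc_le hs0
end

section
/- Let N be a random variable with the Poisson distribution of mean 1, and set U = N − 1 and V = (N − 1)² − N. Then for every real number α, E[(U + αV)³] = 1 + 6α + 12α² + 12α³. -/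
open MeasureTheory
open scoped ENNReal NNReal

private lemma exp_one_tsum : ∑' n : ℕ, (1:ℝ) / n.factorial = Real.exp 1 := by
  rw [Real.exp_eq_exp_ℝ, NormedSpace.exp_eq_tsum_div]
  norm_num

/-- weighted descFactorial series -/
private lemma desc_shift (r j : ℕ) :
    ((j + r).descFactorial r : ℝ) / (j + r).factorial = 1 / j.factorial := by
  have h : r ≤ j + r := Nat.le_add_left r j
  have := Nat.factorial_mul_descFactorial h
  rw [Nat.add_sub_cancel] at this
  have hj : (0:ℝ) < j.factorial := by exact_mod_cast j.factorial_pos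
  have hjr : (0:ℝ) < (j+r).factorial := by exact_mod_cast (j+r).factorial_pos
  rw [div_eq_div_iff hjr.ne' hj.ne', one_mul, ← this]
  push_cast
  ring

private lemma S (r : ℕ) : Summable (fun k : ℕ => ((k.descFactorial r : ℝ)) / k.factorial) := by
  rw [← summable_nat_add_iff r]
  simp only [desc_shift]
  simpa using Real.summable_pow_div_factorial 1

private lemma TS (r : ℕ) : ∑' k : ℕ, ((k.descFactorial r : ℝ)) / k.factorial = Real.exp 1 := by
  rw [← Summable.sum_add_tsum_nat_add r (S r)]
  have h1 : ∀ i ∈ Finset.range r, ((i.descFactorial r : ℝ)) / i.factorial = 0 := by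
    intro i hi
    rw [Nat.descFactorial_of_lt (Finset.mem_range.mp hi)]
    simp
  rw [Finset.sum_congr rfl h1]
  simp only [desc_shift]
  simpa using exp_one_tsum

private lemma desc_cast (r k : ℕ) :
    (k.descFactorial (r + 1) : ℝ) = ((k : ℝ) - r) * (k.descFactorial r : ℝ) := by
  rcases lt_or_ge k r with h | h
  · rw [Nat.descFactorial_of_lt h, Nat.descFactorial_of_lt (h.trans (Nat.lt_succ_self r))]
    simp
  · rw [Nat.descFactorial_succ]
    push_cast [Nat.cast_sub h]
    ring

private lemma desc1 (k : ℕ) : (k.descFactorial 1 : ℝ) = (k:ℝ) := by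
  simp [Nat.descFactorial]

private lemma desc2 (k : ℕ) : (k.descFactorial 2 : ℝ) = (k:ℝ) * ((k:ℝ)-1) := by
  have := desc_cast 1 k
  rw [show (1:ℕ)+1 = 2 from rfl, desc1] at this
  rw [this]; ring

private lemma desc3 (k : ℕ) : (k.descFactorial 3 : ℝ) = (k:ℝ) * ((k:ℝ)-1) * ((k:ℝ)-2) := by
  have := desc_cast 2 k
  rw [show (2:ℕ)+1 = 3 from rfl, desc2] at this
  rw [this]; push_cast; ring

private lemma desc4 (k : ℕ) :
    (k.descFactorial 4 : ℝ) = (k:ℝ) * ((k:ℝ)-1) * ((k:ℝ)-2) * ((k:ℝ)-3) := by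
  have := desc_cast 3 k
  rw [show (3:ℕ)+1 = 4 from rfl, desc3] at this
  rw [this]; push_cast; ring

private lemma desc5 (k : ℕ) :
    (k.descFactorial 5 : ℝ) = (k:ℝ) * ((k:ℝ)-1) * ((k:ℝ)-2) * ((k:ℝ)-3) * ((k:ℝ)-4) := by
  have := desc_cast 4 k
  rw [show (4:ℕ)+1 = 5 from rfl, desc4] at this
  rw [this]; push_cast; ring

private lemma desc6 (k : ℕ) :
    (k.descFactorial 6 : ℝ)
      = (k:ℝ) * ((k:ℝ)-1) * ((k:ℝ)-2) * ((k:ℝ)-3) * ((k:ℝ)-4) * ((k:ℝ)-5) := by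
  have := desc_cast 5 k
  rw [show (5:ℕ)+1 = 6 from rfl, desc5] at this
  rw [this]; push_cast; ring

/-- If `N ∼ Poisson(1)`, `U = N − 1` and `V = (N − 1)² − N`, then for every
real `α`, `E[(U + αV)³] = 1 + 6α + 12α² + 12α³`. -/
theorem poisson_combination_third_moment
    {Ω : Type*} [MeasurableSpace Ω] (μ : Measure Ω) [IsProbabilityMeasure μ]
    (N : Ω → ℕ) (hN : Measurable N)
    (hlaw : ∀ k : ℕ, μ {ω | N ω = k} = ENNReal.ofReal (Real.exp (-1) / k.factorial))
    (U V : Ω → ℝ) (hU : U = fun ω => (N ω : ℝ) - 1)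
    (hV : V = fun ω => ((N ω : ℝ) - 1) ^ 2 - N ω) (α : ℝ) :
    (∫ ω, (U ω + α * V ω) ^ 3 ∂μ) = 1 + 6 * α + 12 * α ^ 2 + 12 * α ^ 3 := by
  subst hU hV
  set f : ℕ → ℝ := fun k =>
    ((k : ℝ) - 1 + α * (((k : ℝ) - 1) ^ 2 - (k : ℝ))) ^ 3 with hf
  set p : ℕ → ℝ := fun k => Real.exp (-1) / k.factorial with hp
  have hppos : ∀ k, 0 ≤ p k := fun k => by positivity
  -- coefficients
  obtain ⟨c0, hc0⟩ : ∃ x : ℝ, x = α^3 - 3*α^2 + 3*α - 1 := ⟨_, rfl⟩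
  obtain ⟨c1, hc1⟩ : ∃ x : ℝ, x = -2*α^3 + 3*α^2 - 3*α + 1 := ⟨_, rfl⟩
  obtain ⟨c2, hc2⟩ : ∃ x : ℝ, x = α^3 := ⟨_, rfl⟩
  obtain ⟨c3, hc3⟩ : ∃ x : ℝ, x = 3*α + 1 := ⟨_, rfl⟩
  obtain ⟨c4, hc4⟩ : ∃ x : ℝ, x = 5*α^3 + 9*α^2 + 3*α := ⟨_, rfl⟩
  obtain ⟨c5, hc5⟩ : ∃ x : ℝ, x = 6*α^3 + 3*α^2 := ⟨_, rfl⟩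
  obtain ⟨c6, hc6⟩ : ∃ x : ℝ, x = α^3 := ⟨_, rfl⟩
  set d : ℕ → ℕ → ℝ := fun r k => (k.descFactorial r : ℝ) with hd
  have hid : ∀ k : ℕ, f k = c0 * d 0 k + c1 * d 1 k + c2 * d 2 k + c3 * d 3 k
      + c4 * d 4 k + c5 * d 5 k + c6 * d 6 k := by
    intro k
    simp only [hd]
    rw [desc6 k, desc5 k, desc4 k, desc3 k, desc2 k, desc1 k, Nat.descFactorial_zero]
    push_cast
    rw [hf, hc0, hc1, hc2, hc3, hc4, hc5, hc6]
    ring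
  have hdnn : ∀ r k, 0 ≤ d r k := fun r k => by positivity
  -- the law of N as a measure on ℕ
  set ν : Measure ℕ := μ.map N with hν
  have hνs : ∀ k : ℕ, ν {k} = ENNReal.ofReal (p k) := by
    intro k
    rw [hν, Measure.map_apply hN (measurableSet_singleton k)]
    exact hlaw k
  -- abs bound
  have habs : ∀ k, |f k| * p k ≤
      (|c0| * Real.exp (-1)) * (d 0 k / k.factorial)
      + (|c1| * Real.exp (-1)) * (d 1 k / k.factorial)
      + (|c2| * Real.exp (-1)) * (d 2 k / k.factorial)
      + (|c3| * Real.exp (-1)) * (d 3 k / k.factorial)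
      + (|c4| * Real.exp (-1)) * (d 4 k / k.factorial)
      + (|c5| * Real.exp (-1)) * (d 5 k / k.factorial)
      + (|c6| * Real.exp (-1)) * (d 6 k / k.factorial) := by
    intro k
    have h1 : |f k| ≤ |c0| * d 0 k + |c1| * d 1 k + |c2| * d 2 k + |c3| * d 3 k
        + |c4| * d 4 k + |c5| * d 5 k + |c6| * d 6 k := by
      rw [hid k]
      have A6 := abs_add_le (c0 * d 0 k + c1 * d 1 k + c2 * d 2 k + c3 * d 3 k + c4 * d 4 k
        + c5 * d 5 k) (c6 * d 6 k)
      have A5 := abs_add_le (c0 * d 0 k + c1 * d 1 k + c2 * d 2 k + c3 * d 3 k + c4 * d 4 k)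
        (c5 * d 5 k)
      have A4 := abs_add_le (c0 * d 0 k + c1 * d 1 k + c2 * d 2 k + c3 * d 3 k) (c4 * d 4 k)
      have A3 := abs_add_le (c0 * d 0 k + c1 * d 1 k + c2 * d 2 k) (c3 * d 3 k)
      have A2 := abs_add_le (c0 * d 0 k + c1 * d 1 k) (c2 * d 2 k)
      have A1 := abs_add_le (c0 * d 0 k) (c1 * d 1 k)
      have M : ∀ (c : ℝ) (r : ℕ), |c * d r k| = |c| * d r k := fun c r => by
        rw [abs_mul, abs_of_nonneg (hdnn r k)]
      rw [M c0 0, M c1 1, M c2 2, M c3 3, M c4 4, M c5 5, M c6 6] at *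
      linarith
    calc |f k| * p k ≤ (|c0| * d 0 k + |c1| * d 1 k + |c2| * d 2 k + |c3| * d 3 k
        + |c4| * d 4 k + |c5| * d 5 k + |c6| * d 6 k) * p k := by
          exact mul_le_mul_of_nonneg_right h1 (hppos k)
      _ = _ := by rw [hp]; ring
  have hSr : ∀ (c : ℝ) (r : ℕ),
      Summable (fun k => (c * Real.exp (-1)) * (d r k / k.factorial)) :=
    fun c r => (S r).mul_left _
  have hmaj : Summable (fun k : ℕ =>
      (|c0| * Real.exp (-1)) * (d 0 k / k.factorial)
      + (|c1| * Real.exp (-1)) * (d 1 k / k.factorial)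
      + (|c2| * Real.exp (-1)) * (d 2 k / k.factorial)
      + (|c3| * Real.exp (-1)) * (d 3 k / k.factorial)
      + (|c4| * Real.exp (-1)) * (d 4 k / k.factorial)
      + (|c5| * Real.exp (-1)) * (d 5 k / k.factorial)
      + (|c6| * Real.exp (-1)) * (d 6 k / k.factorial)) :=
    ((((((hSr |c0| 0).add (hSr |c1| 1)).add (hSr |c2| 2)).add (hSr |c3| 3)).add
      (hSr |c4| 4)).add (hSr |c5| 5)).add (hSr |c6| 6)
  have hgs : Summable (fun k : ℕ => |f k| * p k) :=
    Summable.of_nonneg_of_le (fun k => by positivity) habs hmaj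
  -- integrability
  have hfm : Measurable f := measurable_from_nat
  have hInt : Integrable f ν := by
    refine ⟨hfm.aestronglyMeasurable, ?_⟩
    rw [HasFiniteIntegral, lintegral_countable']
    have : ∀ k : ℕ, ‖f k‖ₑ * ν {k} = ENNReal.ofReal (|f k| * p k) := by
      intro k
      rw [hνs k, Real.enorm_eq_ofReal_abs, ← ENNReal.ofReal_mul (abs_nonneg _)]
    simp only [this]
    rw [← ENNReal.ofReal_tsum_of_nonneg (fun k => by positivity) hgs]
    exact ENNReal.ofReal_lt_top
  -- the integral
  have hmap : (∫ ω, f (N ω) ∂μ) = ∫ k, f k ∂ν := by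
    rw [hν, integral_map hN.aemeasurable hfm.aestronglyMeasurable]
  have hint2 : (∫ k, f k ∂ν) = ∑' k, p k * f k := by
    rw [integral_countable' hInt]
    refine tsum_congr fun k => ?_
    rw [measureReal_def, hνs k, ENNReal.toReal_ofReal (hppos k), smul_eq_mul]
  have hpt : ∀ k : ℕ, p k * f k =
      (c0 * Real.exp (-1)) * (d 0 k / k.factorial)
      + (c1 * Real.exp (-1)) * (d 1 k / k.factorial)
      + (c2 * Real.exp (-1)) * (d 2 k / k.factorial)
      + (c3 * Real.exp (-1)) * (d 3 k / k.factorial)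
      + (c4 * Real.exp (-1)) * (d 4 k / k.factorial)
      + (c5 * Real.exp (-1)) * (d 5 k / k.factorial)
      + (c6 * Real.exp (-1)) * (d 6 k / k.factorial) := by
    intro k
    rw [hid k, hp]
    ring
  have htsum : ∑' k, p k * f k =
      (c0 + c1 + c2 + c3 + c4 + c5 + c6) * (Real.exp (-1) * Real.exp 1) := by
    rw [tsum_congr hpt]
    rw [Summable.tsum_add ((((((hSr c0 0).add (hSr c1 1)).add (hSr c2 2)).add (hSr c3 3)).add
        (hSr c4 4)).add (hSr c5 5)) (hSr c6 6),
      Summable.tsum_add (((((hSr c0 0).add (hSr c1 1)).add (hSr c2 2)).add (hSr c3 3)).add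
        (hSr c4 4)) (hSr c5 5),
      Summable.tsum_add ((((hSr c0 0).add (hSr c1 1)).add (hSr c2 2)).add (hSr c3 3)) (hSr c4 4),
      Summable.tsum_add (((hSr c0 0).add (hSr c1 1)).add (hSr c2 2)) (hSr c3 3),
      Summable.tsum_add ((hSr c0 0).add (hSr c1 1)) (hSr c2 2),
      Summable.tsum_add (hSr c0 0) (hSr c1 1)]
    have TS' : ∀ r, ∑' x, d r x / ((x.factorial : ℕ) : ℝ) = Real.exp 1 := fun r => by
      simp only [hd]; exact TS r
    simp only [tsum_mul_left, TS, TS']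
    ring
  have hexp1 : Real.exp (-1) * Real.exp 1 = 1 := by
    rw [← Real.exp_add]; norm_num
  have : (∫ ω, f (N ω) ∂μ) = 1 + 6 * α + 12 * α ^ 2 + 12 * α ^ 3 := by
    rw [hmap, hint2, htsum, hexp1, hc0, hc1, hc2, hc3, hc4, hc5, hc6]
    ring
  exact this
end

section
/- Let N be a random variable with the Poisson distribution of mean 1, set U = N − 1, V = (N − 1)² − N, and for α ∈ ℝ let S_α = (U + αV)/√(1 + 2α²). Then E[S_α⁴] = 3 if and only if 200α⁴ + 224α³ + 96α² + 24α + 1 = 0. -/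
open MeasureTheory

noncomputable def pw (k : ℕ) : ℝ := Real.exp (-1) / k.factorial

lemma pw_nonneg (k : ℕ) : 0 ≤ pw k := by
  unfold pw; positivity

lemma summable_pw : Summable pw := by
  have := (Real.summable_pow_div_factorial 1).mul_left (Real.exp (-1))
  exact this.congr fun k => by simp [pw, div_eq_mul_inv]

lemma tsum_pw : ∑' k, pw k = 1 := by
  have h1 : ∑' k : ℕ, (1:ℝ) ^ k / k.factorial = Real.exp 1 := by
    rw [Real.exp_eq_exp_ℝ, NormedSpace.exp_eq_tsum_div]
  have : ∑' k, pw k = Real.exp (-1) * ∑' k : ℕ, (1:ℝ) ^ k / k.factorial := by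
    rw [← tsum_mul_left]
    congr 1; funext k; simp [pw, div_eq_mul_inv]
  rw [this, h1, ← Real.exp_add]
  norm_num

noncomputable def pd (j k : ℕ) : ℝ := (k.descFactorial j : ℝ)

lemma pd_shift (j k : ℕ) : pd j (k + j) * pw (k + j) = pw k := by
  have h := Nat.factorial_mul_descFactorial (n := k + j) (k := j) (Nat.le_add_left j k)
  simp only [Nat.add_sub_cancel] at h
  unfold pd pw
  have hk : (k.factorial : ℝ) ≠ 0 := by positivity
  have hkj : ((k+j).factorial : ℝ) ≠ 0 := by positivity
  field_simp
  calc ((k + j).descFactorial j : ℝ) * k.factorial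
      = ((k.factorial * (k+j).descFactorial j : ℕ) : ℝ) := by
        push_cast; ring
    _ = (k + j).factorial := by rw [h]

lemma summable_pdw (j : ℕ) : Summable (fun k => pd j k * pw k) := by
  rw [← summable_nat_add_iff j]
  simpa only [pd_shift] using summable_pw

lemma tsum_pdw (j : ℕ) : ∑' k, pd j k * pw k = 1 := by
  rw [← Summable.sum_add_tsum_nat_add j (summable_pdw j)]
  have h0 : ∀ i ∈ Finset.range j, pd j i * pw i = 0 := by
    intro i hi
    have : i.descFactorial j = 0 := Nat.descFactorial_eq_zero_iff_lt.mpr (Finset.mem_range.mp hi)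
    simp [pd, this]
  rw [Finset.sum_congr rfl h0, Finset.sum_const, smul_zero, zero_add]
  simpa only [pd_shift] using tsum_pw

lemma poisson_integral_comp {Ω : Type*} [MeasurableSpace Ω] (μ : Measure Ω)
    (N : Ω → ℕ) (hN : Measurable N)
    (hlaw : ∀ k : ℕ, μ {ω | N ω = k} = ENNReal.ofReal (Real.exp (-1) / k.factorial))
    (f : ℕ → ℝ) (hs : Summable (fun k => |f k| * pw k)) :
    ∫ ω, f (N ω) ∂μ = ∑' k, f k * pw k := by
  have hνk : ∀ k, (μ.map N) {k} = ENNReal.ofReal (pw k) := by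
    intro k
    rw [Measure.map_apply hN (MeasurableSet.singleton k)]
    simpa [Set.preimage, pw] using hlaw k
  have hfm : Measurable f := measurable_from_top
  have hint : Integrable f (μ.map N) := by
    refine ⟨hfm.aestronglyMeasurable, ?_⟩
    rw [HasFiniteIntegral, lintegral_countable']
    have heq : ∀ k : ℕ, ‖f k‖ₑ * (μ.map N) {k} = ENNReal.ofReal (|f k| * pw k) := by
      intro k
      rw [hνk k, ENNReal.ofReal_mul (abs_nonneg _)]
      congr 1
      simp [Real.enorm_eq_ofReal_abs]
    rw [tsum_congr heq, ← ENNReal.ofReal_tsum_of_nonneg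
      (fun k => mul_nonneg (abs_nonneg _) (pw_nonneg k)) hs]
    exact ENNReal.ofReal_lt_top
  rw [← integral_map hN.aemeasurable hfm.aestronglyMeasurable, integral_countable' hint]
  congr 1; funext k
  rw [measureReal_def, hνk k, ENNReal.toReal_ofReal (pw_nonneg k), smul_eq_mul, mul_comm]

lemma pd_zero (k : ℕ) : pd 0 k = 1 := by simp [pd]

lemma pd_succ (j k : ℕ) : pd (j+1) k = pd j k * ((k:ℝ) - (j:ℕ)) := by
  unfold pd
  rw [← descPochhammer_eval_eq_descFactorial ℝ, ← descPochhammer_eval_eq_descFactorial ℝ,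
    descPochhammer_succ_right, Polynomial.eval_mul]
  simp

lemma tsum_pdw_comb (c : ℕ → ℝ) (n : ℕ) :
    Summable (fun k => ∑ j ∈ Finset.range n, c j * (pd j k * pw k)) ∧
    ∑' k, ∑ j ∈ Finset.range n, c j * (pd j k * pw k) = ∑ j ∈ Finset.range n, c j := by
  constructor
  · exact summable_sum fun j _ => ((summable_pdw j).mul_left _)
  · rw [Summable.tsum_finsetSum (fun j _ => (summable_pdw j).mul_left _)]
    exact Finset.sum_congr rfl fun j _ => by rw [tsum_mul_left, tsum_pdw, mul_one]


/-- If `N ∼ Poisson(1)`, `U = N − 1`, `V = (N − 1)² − N` and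
`S_α = (U + αV)/√(1 + 2α²)`, then `E[S_α⁴] = 3` if and only if
`200α⁴ + 224α³ + 96α² + 24α + 1 = 0`. -/
theorem poisson_normalized_fourth_moment_iff
    {Ω : Type*} [MeasurableSpace Ω] (μ : Measure Ω) [IsProbabilityMeasure μ]
    (N : Ω → ℕ) (hN : Measurable N)
    (hlaw : ∀ k : ℕ, μ {ω | N ω = k} = ENNReal.ofReal (Real.exp (-1) / k.factorial))
    (U V : Ω → ℝ) (hU : U = fun ω => (N ω : ℝ) - 1)
    (hV : V = fun ω => ((N ω : ℝ) - 1) ^ 2 - N ω)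
    (α : ℝ) (S : Ω → ℝ)
    (hS : S = fun ω => (U ω + α * V ω) / Real.sqrt (1 + 2 * α ^ 2)) :
    (∫ ω, S ω ^ 4 ∂μ) = 3
      ↔ 200 * α ^ 4 + 224 * α ^ 3 + 96 * α ^ 2 + 24 * α + 1 = 0 := by
  subst hU hV hS
  have hT : (0:ℝ) < 1 + 2 * α ^ 2 := by positivity
  have hsq : Real.sqrt (1 + 2 * α ^ 2) ^ 4 = (1 + 2 * α ^ 2) ^ 2 := by
    rw [show (4:ℕ) = 2*2 from rfl, pow_mul, Real.sq_sqrt hT.le]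
  set c : ℕ → ℝ := fun j =>
    match j with
    | 0 => 1 - 4*α + 6*α^2 - 4*α^3 + α^4
    | 1 => -1 + 4*α - 6*α^2 + 4*α^3
    | 2 => 1 - 4*α + 6*α^2 - 4*α^3
    | 3 => 2 + 8*α + 4*α^3
    | 4 => 1 + 16*α + 54*α^2 + 60*α^3 + 26*α^4
    | 5 => 4*α + 42*α^2 + 116*α^3 + 96*α^4
    | 6 => 6*α^2 + 44*α^3 + 72*α^4
    | 7 => 4*α^3 + 16*α^4
    | _ => α^4 with hcdef
  have hc0 : c 0 = 1 - 4*α + 6*α^2 - 4*α^3 + α^4 := rfl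
  have hc1 : c 1 = -1 + 4*α - 6*α^2 + 4*α^3 := rfl
  have hc2 : c 2 = 1 - 4*α + 6*α^2 - 4*α^3 := rfl
  have hc3 : c 3 = 2 + 8*α + 4*α^3 := rfl
  have hc4 : c 4 = 1 + 16*α + 54*α^2 + 60*α^3 + 26*α^4 := rfl
  have hc5 : c 5 = 4*α + 42*α^2 + 116*α^3 + 96*α^4 := rfl
  have hc6 : c 6 = 6*α^2 + 44*α^3 + 72*α^4 := rfl
  have hc7 : c 7 = 4*α^3 + 16*α^4 := rfl
  have hc8 : c 8 = α^4 := rfl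
  set f : ℕ → ℝ := fun k => ((k:ℝ) - 1 + α * (((k:ℝ) - 1)^2 - (k:ℝ)))^4 with hfdef
  have hfd : ∀ k, f k * pw k = ∑ j ∈ Finset.range 9, c j * (pd j k * pw k) := by
    intro k
    have p1 : pd 1 k = pd 0 k * ((k:ℝ) - (0:ℕ)) := pd_succ 0 k
    have p2 : pd 2 k = pd 1 k * ((k:ℝ) - (1:ℕ)) := pd_succ 1 k
    have p3 : pd 3 k = pd 2 k * ((k:ℝ) - (2:ℕ)) := pd_succ 2 k
    have p4 : pd 4 k = pd 3 k * ((k:ℝ) - (3:ℕ)) := pd_succ 3 k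
    have p5 : pd 5 k = pd 4 k * ((k:ℝ) - (4:ℕ)) := pd_succ 4 k
    have p6 : pd 6 k = pd 5 k * ((k:ℝ) - (5:ℕ)) := pd_succ 5 k
    have p7 : pd 7 k = pd 6 k * ((k:ℝ) - (6:ℕ)) := pd_succ 6 k
    have p8 : pd 8 k = pd 7 k * ((k:ℝ) - (7:ℕ)) := pd_succ 7 k
    simp only [Finset.sum_range_succ, Finset.sum_range_zero, hc0, hc1, hc2, hc3, hc4,
      hc5, hc6, hc7, hc8, p8, p7, p6, p5, p4, p3, p2, p1, pd_zero, hfdef]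
    push_cast
    ring
  obtain ⟨hsumm, htsum⟩ := tsum_pdw_comb c 9
  have hs : Summable (fun k => |f k| * pw k) := by
    have habs : ∀ k, |f k| * pw k = ∑ j ∈ Finset.range 9, c j * (pd j k * pw k) := by
      intro k
      rw [← hfd k]
      congr 1
      exact abs_of_nonneg (by rw [hfdef]; positivity)
    simpa only [habs] using hsumm
  have hint := poisson_integral_comp μ N hN hlaw f hs
  have hts : ∑' k, f k * pw k = 4 + 24*α + 108*α^2 + 224*α^3 + 212*α^4 := by
    rw [tsum_congr hfd, htsum]
    simp only [Finset.sum_range_succ, Finset.sum_range_zero, hc0, hc1, hc2, hc3, hc4,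
      hc5, hc6, hc7, hc8]
    ring
  have hgoal : (∫ ω, (((N ω : ℝ) - 1 + α * (((N ω : ℝ) - 1) ^ 2 - (N ω : ℝ))) /
      Real.sqrt (1 + 2 * α ^ 2)) ^ 4 ∂μ)
      = (4 + 24*α + 108*α^2 + 224*α^3 + 212*α^4) / (1 + 2 * α ^ 2) ^ 2 := by
    simp_rw [div_pow, hsq]
    rw [integral_div]
    rw [show (fun ω => ((N ω : ℝ) - 1 + α * (((N ω : ℝ) - 1) ^ 2 - (N ω : ℝ))) ^ 4)
      = fun ω => f (N ω) from rfl]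
    rw [hint, hts]
  simp only []
  rw [hgoal, div_eq_iff (by positivity : ((1 + 2 * α ^ 2) ^ 2 : ℝ) ≠ 0)]
  constructor
  · intro h; linear_combination h
  · intro h; linear_combination h
end

section
/- Let N be a random variable with the Poisson distribution of mean 1, set U = N − 1 and V = (N − 1)² − N. Then there exists a real number α* such that the normalized random variable S = (U + α*V)/√(1 + 2α*²) satisfies E[S²] = 1, E[S⁴] = 3 and E[S³] ≠ 0. -/
open MeasureTheory
open Finset

/-- Cast of descending factorial as a real product. -/
lemma myCastDescFact (k r : ℕ) :
    (k.descFactorial r : ℝ) = ∏ i ∈ Finset.range r, ((k : ℝ) - i) := by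
  induction r with
  | zero => simp
  | succ r ih =>
    rw [Nat.descFactorial_succ, Finset.prod_range_succ, ← ih]
    rcases le_or_gt r k with h | h
    · rw [Nat.cast_mul, Nat.cast_sub h]; ring
    · rw [Nat.descFactorial_of_lt h]; simp

lemma myDescFactShift (r k : ℕ) :
    ((k + r).descFactorial r : ℝ) / (k + r).factorial = 1 / k.factorial := by
  have h : (k + r - r).factorial * (k + r).descFactorial r = (k + r).factorial :=
    Nat.factorial_mul_descFactorial (Nat.le_add_left r k)
  rw [Nat.add_sub_cancel] at h
  have h' : (k.factorial : ℝ) * (k + r).descFactorial r = (k + r).factorial := by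
    exact_mod_cast congrArg (Nat.cast (R := ℝ)) h
  have h1 : (k.factorial : ℝ) ≠ 0 := by positivity
  have h2 : ((k + r).factorial : ℝ) ≠ 0 := by positivity
  field_simp
  linarith [h']

lemma mySummableDescFact (r : ℕ) :
    Summable (fun k : ℕ => (k.descFactorial r : ℝ) / k.factorial) := by
  rw [← summable_nat_add_iff r]
  refine ((Real.summable_pow_div_factorial 1).congr ?_)
  intro n
  rw [one_pow]
  exact (myDescFactShift r n).symm

lemma myTsumDescFact (r : ℕ) :
    ∑' k : ℕ, ((k.descFactorial r : ℝ) / k.factorial) = Real.exp 1 := by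
  have hs := mySummableDescFact r
  have h1 := Summable.sum_add_tsum_nat_add (f := fun k : ℕ => (k.descFactorial r : ℝ) / k.factorial) r hs
  have hz : ∑ i ∈ Finset.range r, ((i.descFactorial r : ℝ) / i.factorial) = 0 :=
    Finset.sum_eq_zero fun i hi => by
      rw [Nat.descFactorial_of_lt (Finset.mem_range.1 hi)]; simp
  rw [← h1, hz, zero_add]
  have h2 : ∀ i : ℕ, ((i + r).descFactorial r : ℝ) / (i + r).factorial
      = (1:ℝ)^i / i.factorial := fun i => by rw [one_pow]; exact myDescFactShift r i
  rw [tsum_congr h2]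
  rw [Real.exp_eq_exp_ℝ, NormedSpace.exp_eq_tsum_div]

lemma myDescFactIntegral
    {Ω : Type*} [MeasurableSpace Ω] (μ : Measure Ω) [IsProbabilityMeasure μ]
    (N : Ω → ℕ) (hN : Measurable N)
    (hlaw : ∀ k : ℕ, μ {ω | N ω = k} = ENNReal.ofReal (Real.exp (-1) / k.factorial))
    (r : ℕ) :
    Integrable (fun ω => (Nat.descFactorial (N ω) r : ℝ)) μ ∧
      ∫ ω, (Nat.descFactorial (N ω) r : ℝ) ∂μ = 1 := by
  set ν : Measure ℕ := μ.map N with hνdef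
  have hν : ∀ k : ℕ, ν {k} = ENNReal.ofReal (Real.exp (-1) / k.factorial) := by
    intro k
    rw [hνdef, Measure.map_apply hN (measurableSet_singleton k)]
    have : N ⁻¹' {k} = {ω | N ω = k} := rfl
    rw [this, hlaw k]
  set f : ℕ → ℝ := fun k => (Nat.descFactorial k r : ℝ) with hfdef
  have hfm : Measurable f := measurable_from_nat
  have hfnn : ∀ k, 0 ≤ f k := fun k => Nat.cast_nonneg _
  -- summability of f k * (exp(-1)/k!)
  have hsum : Summable (fun k : ℕ => f k * (Real.exp (-1) / k.factorial)) := by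
    refine ((mySummableDescFact r).mul_left (Real.exp (-1))).congr fun k => ?_
    rw [hfdef]; ring
  have hint : Integrable f ν := by
    refine ⟨hfm.aestronglyMeasurable, ?_⟩
    rw [HasFiniteIntegral]
    have hl : ∫⁻ k, ‖f k‖ₑ ∂ν = ∑' k : ℕ, ‖f k‖ₑ * ν {k} :=
      lintegral_countable' _
    rw [hl]
    have he : ∀ k : ℕ, ‖f k‖ₑ * ν {k}
        = ENNReal.ofReal (f k * (Real.exp (-1) / k.factorial)) := by
      intro k
      rw [Real.enorm_eq_ofReal (hfnn k), hν k,
        ← ENNReal.ofReal_mul (hfnn k)]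
    rw [tsum_congr he, ← ENNReal.ofReal_tsum_of_nonneg (fun k => by positivity) hsum]
    exact ENNReal.ofReal_lt_top
  have hIcomp : Integrable (fun ω => f (N ω)) μ := by
    have := (integrable_map_measure hfm.aestronglyMeasurable hN.aemeasurable).1 hint
    exact this
  refine ⟨hIcomp, ?_⟩
  have hmap : ∫ ω, f (N ω) ∂μ = ∫ k, f k ∂ν :=
    (integral_map hN.aemeasurable hfm.aestronglyMeasurable).symm
  rw [hmap, integral_countable' hint]
  have hterm : ∀ k : ℕ, ν.real {k} • f k
      = Real.exp (-1) * (f k / k.factorial) := by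
    intro k
    rw [measureReal_def, hν k, ENNReal.toReal_ofReal (by positivity), smul_eq_mul]
    ring
  rw [tsum_congr hterm, tsum_mul_left, hfdef, myTsumDescFact r, ← Real.exp_add]
  norm_num

lemma myComb
    {Ω : Type*} [MeasurableSpace Ω] (μ : Measure Ω) [IsProbabilityMeasure μ]
    (N : Ω → ℕ) (hN : Measurable N)
    (hlaw : ∀ k : ℕ, μ {ω | N ω = k} = ENNReal.ofReal (Real.exp (-1) / k.factorial))
    (c : ℕ → ℝ) (n : ℕ) :
    ∫ ω, (∑ r ∈ Finset.range n, c r * (Nat.descFactorial (N ω) r : ℝ)) ∂μ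
      = ∑ r ∈ Finset.range n, c r := by
  rw [integral_finset_sum _
    (fun r _ => ((myDescFactIntegral μ N hN hlaw r).1.const_mul (c r)))]
  refine Finset.sum_congr rfl fun r _ => ?_
  rw [integral_const_mul, (myDescFactIntegral μ N hN hlaw r).2, mul_one]

/-- If `N ∼ Poisson(1)`, `U = N − 1` and `V = (N − 1)² − N`, then there is a
real `α*` such that `S = (U + α*V)/√(1 + 2α*²)` satisfies `E[S²] = 1`,
`E[S⁴] = 3` and `E[S³] ≠ 0`. -/
theorem poisson_counterexample_moments
    {Ω : Type*} [MeasurableSpace Ω] (μ : Measure Ω) [IsProbabilityMeasure μ]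
    (N : Ω → ℕ) (hN : Measurable N)
    (hlaw : ∀ k : ℕ, μ {ω | N ω = k} = ENNReal.ofReal (Real.exp (-1) / k.factorial))
    (U V : Ω → ℝ) (hU : U = fun ω => (N ω : ℝ) - 1)
    (hV : V = fun ω => ((N ω : ℝ) - 1) ^ 2 - N ω) :
    ∃ α : ℝ, ∀ S : Ω → ℝ,
      S = (fun ω => (U ω + α * V ω) / Real.sqrt (1 + 2 * α ^ 2)) →
        (∫ ω, S ω ^ 2 ∂μ) = 1 ∧ (∫ ω, S ω ^ 4 ∂μ) = 3
        ∧ (∫ ω, S ω ^ 3 ∂μ) ≠ 0 := by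
  -- choose the root α of 200α⁴+224α³+96α²+24α+1 in [-3/50, -1/20]
  obtain ⟨α, ⟨hα1, hα2⟩, hroot⟩ :
      ∃ a : ℝ, a ∈ Set.Icc (-(3:ℝ)/50) (-(1:ℝ)/20) ∧
        200*a^4 + 224*a^3 + 96*a^2 + 24*a + 1 = 0 := by
    have hc : ContinuousOn (fun a : ℝ => 200*a^4 + 224*a^3 + 96*a^2 + 24*a + 1)
        (Set.Icc (-(3:ℝ)/50) (-(1:ℝ)/20)) := by fun_prop
    have hsub := intermediate_value_Icc (by norm_num : (-(3:ℝ)/50) ≤ -(1:ℝ)/20) hc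
    have h0 : (0:ℝ) ∈ Set.Icc
        ((fun a : ℝ => 200*a^4 + 224*a^3 + 96*a^2 + 24*a + 1) (-(3:ℝ)/50))
        ((fun a : ℝ => 200*a^4 + 224*a^3 + 96*a^2 + 24*a + 1) (-(1:ℝ)/20)) := by
      constructor <;> norm_num
    obtain ⟨a, ha, hfa⟩ := hsub h0
    exact ⟨a, ha, hfa⟩
  refine ⟨α, fun S hS => ?_⟩
  subst hS hU hV
  have htpos : (0:ℝ) < 1 + 2*α^2 := by positivity
  have hsq : Real.sqrt (1 + 2*α^2) ^ 2 = 1 + 2*α^2 := Real.sq_sqrt htpos.le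
  have hsqpos : 0 < Real.sqrt (1 + 2*α^2) := Real.sqrt_pos.2 htpos
  -- the three moment computations for W = U + αV
  have key2 : ∫ ω, (((N ω : ℝ) - 1) + α * (((N ω : ℝ) - 1)^2 - (N ω : ℝ)))^2 ∂μ
      = 1 + 2*α^2 := by
    have h2 : (fun ω => (((N ω : ℝ) - 1) + α * (((N ω : ℝ) - 1)^2 - (N ω : ℝ)))^2)
        = (fun ω => ∑ r ∈ Finset.range 5,
            (fun r => if r = 0 then 1 - 2*α + α^2 else if r = 1 then -1 + 2*α
              else if r = 2 then 1 - 2*α else if r = 3 then 2*α else α^2) r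
            * (Nat.descFactorial (N ω) r : ℝ)) := by
      funext ω
      simp only [Finset.sum_range_succ, Finset.sum_range_zero, myCastDescFact,
        Finset.prod_range_succ, Finset.prod_range_zero]
      norm_num
      ring
    rw [h2, myComb μ N hN hlaw _ 5]
    simp only [Finset.sum_range_succ, Finset.sum_range_zero]
    norm_num
    ring
  have key3 : ∫ ω, (((N ω : ℝ) - 1) + α * (((N ω : ℝ) - 1)^2 - (N ω : ℝ)))^3 ∂μ
      = 1 + 6*α + 12*α^2 + 12*α^3 := by
    have h3 : (fun ω => (((N ω : ℝ) - 1) + α * (((N ω : ℝ) - 1)^2 - (N ω : ℝ)))^3)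
        = (fun ω => ∑ r ∈ Finset.range 7,
            (fun r => if r = 0 then -1 + 3*α - 3*α^2 + α^3
              else if r = 1 then 1 - 3*α + 3*α^2 - 2*α^3
              else if r = 2 then α^3
              else if r = 3 then 1 + 3*α
              else if r = 4 then 3*α + 9*α^2 + 5*α^3
              else if r = 5 then 3*α^2 + 6*α^3 else α^3) r
            * (Nat.descFactorial (N ω) r : ℝ)) := by
      funext ω
      simp only [Finset.sum_range_succ, Finset.sum_range_zero, myCastDescFact,
        Finset.prod_range_succ, Finset.prod_range_zero]
      norm_num
      ring
    rw [h3, myComb μ N hN hlaw _ 7]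
    simp only [Finset.sum_range_succ, Finset.sum_range_zero]
    norm_num
    ring
  have key4 : ∫ ω, (((N ω : ℝ) - 1) + α * (((N ω : ℝ) - 1)^2 - (N ω : ℝ)))^4 ∂μ
      = 4 + 24*α + 108*α^2 + 224*α^3 + 212*α^4 := by
    have h4 : (fun ω => (((N ω : ℝ) - 1) + α * (((N ω : ℝ) - 1)^2 - (N ω : ℝ)))^4)
        = (fun ω => ∑ r ∈ Finset.range 9,
            (fun r => if r = 0 then 1 - 4*α + 6*α^2 - 4*α^3 + α^4
              else if r = 1 then -1 + 4*α - 6*α^2 + 4*α^3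
              else if r = 2 then 1 - 4*α + 6*α^2 - 4*α^3
              else if r = 3 then 2 + 8*α + 4*α^3
              else if r = 4 then 1 + 16*α + 54*α^2 + 60*α^3 + 26*α^4
              else if r = 5 then 4*α + 42*α^2 + 116*α^3 + 96*α^4
              else if r = 6 then 6*α^2 + 44*α^3 + 72*α^4
              else if r = 7 then 4*α^3 + 16*α^4 else α^4) r
            * (Nat.descFactorial (N ω) r : ℝ)) := by
      funext ω
      simp only [Finset.sum_range_succ, Finset.sum_range_zero, myCastDescFact,
        Finset.prod_range_succ, Finset.prod_range_zero]
      norm_num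
      ring
    rw [h4, myComb μ N hN hlaw _ 9]
    simp only [Finset.sum_range_succ, Finset.sum_range_zero]
    norm_num
    ring
  refine ⟨?_, ?_, ?_⟩
  · simp only [div_pow]
    rw [integral_div, key2, hsq]
    field_simp
  · simp only [div_pow]
    rw [integral_div, key4,
      show Real.sqrt (1 + 2*α^2) ^ 4 = (1 + 2*α^2)^2 by
        rw [show (4:ℕ) = 2*2 from rfl, pow_mul, hsq]]
    rw [div_eq_iff (by positivity)]
    nlinarith [hroot]
  · simp only [div_pow]
    rw [integral_div, key3,
      show Real.sqrt (1 + 2*α^2) ^ 3 = (1 + 2*α^2) * Real.sqrt (1 + 2*α^2) by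
        rw [pow_succ, hsq]]
    have hnum : 0 < 1 + 6*α + 12*α^2 + 12*α^3 := by nlinarith [hα1, hα2, sq_nonneg α]
    exact ne_of_gt (div_pos hnum (by positivity))
end
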